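/- Let H be a hyperbolic group with finite generating set A and word metric d_A, and let φ : H → H be an endomorphism that is a quasi-isometric embedding of (H, d_A) into itself, i.e., there exist λ ≥ 1 and k ≥ 0 with λ⁻¹ d_A(x,y) − k ≤ d_A(φ(x), φ(y)) ≤ λ d_A(x,y) + k for all x, y ∈ H. Then the BRP holds for φ: for every p ≥ 0 there exists q ≥ 0 such that for all u, v ∈ H, (u|v) ≤ p implies (φ(u)|φ(v)) ≤ q. -/

import Mathlib

namespace Paper

variable {H : Type*} [Group H]

/-- `g` can be written as a product of `n` elements of `A ∪ A⁻¹`. -/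
def WordWitness (A : Set H) (g : H) (n : ℕ) : Prop :=
  ∃ l : List H, l.length = n ∧ (∀ x ∈ l, x ∈ A ∨ x⁻¹ ∈ A) ∧ l.prod = g

/-- The word metric on `H` with respect to the generating set `A`. -/
noncomputable def wd (A : Set H) (g h : H) : ℕ :=
  sInf {n | WordWitness A (g⁻¹ * h) n}

/-- The Gromov product `(u|v)_w` with respect to the word metric for `A`. -/
noncomputable def gp (A : Set H) (w u v : H) : ℝ :=
  ((wd A w u : ℝ) + (wd A w v : ℝ) - (wd A u v : ℝ)) / 2

/-- A discrete geodesic `γ : {0,…,n} → H` from `x` to `y` for the word metric of `A`. -/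
def IsDiscreteGeodesic (A : Set H) (n : ℕ) (γ : ℕ → H) (x y : H) : Prop :=
  γ 0 = x ∧ γ n = y ∧
    ∀ i, i ≤ n → ∀ j, j ≤ n → (wd A (γ i) (γ j) : ℤ) = |(i : ℤ) - (j : ℤ)|

/-- `H` is hyperbolic with respect to `A`: some `δ ≥ 0` satisfies the Rips thin-triangles
condition for discrete geodesics (all three sides are covered since `x, y, z` and the three
geodesics are universally quantified, and hence may be cyclically permuted). -/
def IsHyperbolic (A : Set H) : Prop :=
  ∃ δ : ℝ, 0 ≤ δ ∧ ∀ x y z : H, ∀ n₁ n₂ n₃ : ℕ, ∀ α β γ : ℕ → H,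
    IsDiscreteGeodesic A n₁ α x y → IsDiscreteGeodesic A n₂ β y z →
    IsDiscreteGeodesic A n₃ γ z x → ∀ i, i ≤ n₁ →
      ∃ j, (j ≤ n₂ ∧ (wd A (α i) (β j) : ℝ) ≤ δ) ∨
           (j ≤ n₃ ∧ (wd A (α i) (γ j) : ℝ) ≤ δ)

/-- The bounded reduction property for `φ`, in its Gromov-product formulation:
for every `p ≥ 0` there is `q ≥ 0` such that `(u|v) ≤ p` implies `(φ(u)|φ(v)) ≤ q`. -/
def BRP (A : Set H) (φ : H →* H) : Prop :=
  ∀ p : ℝ, 0 ≤ p → ∃ q : ℝ, 0 ≤ q ∧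
    ∀ u v : H, gp A 1 u v ≤ p → gp A 1 (φ u) (φ v) ≤ q

section Aux

variable {A : Set H}


lemma exists_witness (hgen : Subgroup.closure A = ⊤) (g : H) :
    ∃ l : List H, (∀ x ∈ l, x ∈ A ∨ x⁻¹ ∈ A) ∧ l.prod = g := by
  have hg : g ∈ Subgroup.closure A := by rw [hgen]; trivial
  induction hg using Subgroup.closure_induction with
  | mem x hx => exact ⟨[x], by simpa using Or.inl hx, by simp⟩
  | one => exact ⟨[], by simp, by simp⟩
  | mul x y hx hy ihx ihy =>
      obtain ⟨l₁, h₁, hp₁⟩ := ihx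
      obtain ⟨l₂, h₂, hp₂⟩ := ihy
      exact ⟨l₁ ++ l₂, by
        intro a ha
        rcases List.mem_append.1 ha with h | h
        · exact h₁ a h
        · exact h₂ a h, by rw [List.prod_append, hp₁, hp₂]⟩
  | inv x hx ihx =>
      obtain ⟨l, h, hp⟩ := ihx
      refine ⟨(l.map (fun a => a⁻¹)).reverse, ?_, ?_⟩
      · intro a ha
        rw [List.mem_reverse, List.mem_map] at ha
        obtain ⟨b, hb, rfl⟩ := ha
        rcases h b hb with h' | h'
        · exact Or.inr (by simpa using h')
        · exact Or.inl h'
      · rw [← List.prod_inv_reverse, hp]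

lemma wd_set_nonempty (hgen : Subgroup.closure A = ⊤) (x y : H) :
    {n | WordWitness A (x⁻¹ * y) n}.Nonempty := by
  obtain ⟨l, h, hp⟩ := exists_witness hgen (x⁻¹ * y)
  exact ⟨l.length, l, rfl, h, hp⟩

lemma wd_witness (hgen : Subgroup.closure A = ⊤) (x y : H) :
    WordWitness A (x⁻¹ * y) (wd A x y) :=
  Nat.sInf_mem (wd_set_nonempty hgen x y)

lemma wd_le {x y : H} {n : ℕ} (h : WordWitness A (x⁻¹ * y) n) : wd A x y ≤ n :=
  Nat.sInf_le h

lemma wd_self (x : H) : wd A x x = 0 :=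
  Nat.le_zero.1 (wd_le ⟨[], rfl, by simp, by simp⟩)

lemma eq_of_wd_eq_zero (hgen : Subgroup.closure A = ⊤) {x y : H}
    (h : wd A x y = 0) : x = y := by
  obtain ⟨l, hl, -, hp⟩ := wd_witness hgen x y
  rw [h, List.length_eq_zero_iff] at hl
  subst hl
  simp only [List.prod_nil] at hp
  have : x * (x⁻¹ * y) = x * 1 := by rw [hp]
  simpa [mul_assoc] using this.symm

lemma wordWitness_inv {g : H} {n : ℕ} (h : WordWitness A g n) :
    WordWitness A g⁻¹ n := by
  obtain ⟨l, hl, hm, hp⟩ := h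
  refine ⟨(l.map (fun a => a⁻¹)).reverse, by simp [hl], ?_, by rw [← List.prod_inv_reverse, hp]⟩
  intro a ha
  rw [List.mem_reverse, List.mem_map] at ha
  obtain ⟨b, hb, rfl⟩ := ha
  rcases hm b hb with h' | h'
  · exact Or.inr (by simpa using h')
  · exact Or.inl h'

lemma wd_comm (hgen : Subgroup.closure A = ⊤) (x y : H) : wd A x y = wd A y x := by
  have key : ∀ a b : H, wd A a b ≤ wd A b a := by
    intro a b
    have h := wordWitness_inv (wd_witness hgen b a)
    rw [mul_inv_rev, inv_inv] at h
    exact wd_le h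
  exact le_antisymm (key x y) (key y x)

lemma wd_triangle (hgen : Subgroup.closure A = ⊤) (x y z : H) :
    wd A x z ≤ wd A x y + wd A y z := by
  obtain ⟨l₁, hl₁, hm₁, hp₁⟩ := wd_witness hgen x y
  obtain ⟨l₂, hl₂, hm₂, hp₂⟩ := wd_witness hgen y z
  refine wd_le ⟨l₁ ++ l₂, by simp [hl₁, hl₂], ?_, ?_⟩
  · intro a ha
    rcases List.mem_append.1 ha with h | h
    · exact hm₁ a h
    · exact hm₂ a h
  · rw [List.prod_append, hp₁, hp₂]; group


lemma exists_geodesic (hgen : Subgroup.closure A = ⊤) (x y : H) :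
    ∃ γ : ℕ → H, IsDiscreteGeodesic A (wd A x y) γ x y := by
  obtain ⟨l, hl, hm, hp⟩ := wd_witness hgen x y
  set n := wd A x y with hn
  refine ⟨fun i => x * (l.take i).prod, by simp, ?_, ?_⟩
  · show x * (l.take n).prod = y
    have : l.take n = l := by rw [← hl]; exact List.take_length
    rw [this, hp]; group
  · -- upper bound: wd (γ i) (γ j) ≤ j - i for i ≤ j ≤ n
    have upper : ∀ i j, i ≤ j → j ≤ n →
        wd A (x * (l.take i).prod) (x * (l.take j).prod) ≤ j - i := by
      intro i j hij hjn
      refine wd_le ⟨(l.drop i).take (j - i), ?_, ?_, ?_⟩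
      · rw [List.length_take, List.length_drop, hl]
        omega
      · intro a ha
        exact hm a (List.mem_of_mem_drop (List.mem_of_mem_take ha))
      · have hsplit : l.take j = l.take i ++ (l.drop i).take (j - i) := by
          rw [← List.take_add]
          congr 1
          omega
        have : (l.take i).prod * ((l.drop i).take (j - i)).prod = (l.take j).prod := by
          rw [hsplit, List.prod_append]
        rw [mul_inv_rev, mul_assoc, ← mul_assoc x⁻¹, inv_mul_cancel, one_mul, ← this]
        group
    have exact_eq : ∀ i j, i ≤ j → j ≤ n →
        wd A (x * (l.take i).prod) (x * (l.take j).prod) = j - i := by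
      intro i j hij hjn
      refine le_antisymm (upper i j hij hjn) ?_
      by_contra hlt
      push_neg at hlt
      have h1 : wd A x (x * (l.take i).prod) ≤ i := by
        have := upper 0 i (Nat.zero_le _) (le_trans hij hjn)
        simpa using this
      have h2 : wd A (x * (l.take j).prod) y ≤ n - j := by
        have := upper j n hjn (le_refl n)
        have hy : x * (l.take n).prod = y := by
          rw [show l.take n = l by rw [← hl]; exact List.take_length, hp]; group
        rw [hy] at this
        omega
      have := wd_triangle hgen x (x * (l.take i).prod) y
      have := wd_triangle hgen (x * (l.take i).prod) (x * (l.take j).prod) y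
      omega
    intro i hi j hj
    rcases le_total i j with h | h
    · rw [exact_eq i j h hj]
      rcases abs_cases ((i:ℤ) - (j:ℤ)) with ⟨he, h0⟩ | ⟨he, h0⟩ <;> rw [he] <;> omega
    · rw [wd_comm hgen, exact_eq j i h hi]
      rcases abs_cases ((i:ℤ) - (j:ℤ)) with ⟨he, h0⟩ | ⟨he, h0⟩ <;> rw [he] <;> omega

lemma geodesic_wd {n : ℕ} {γ : ℕ → H} {x y : H}
    (h : IsDiscreteGeodesic A n γ x y) {i j : ℕ} (hi : i ≤ n) (hj : j ≤ n)
    (hij : i ≤ j) : wd A (γ i) (γ j) = j - i := by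
  have hh := h.2.2 i hi j hj
  rcases abs_cases ((i:ℤ) - (j:ℤ)) with ⟨he, h0⟩ | ⟨he, h0⟩ <;> rw [he] at hh <;> omega

lemma geodesic_len {n : ℕ} {γ : ℕ → H} {x y : H}
    (h : IsDiscreteGeodesic A n γ x y) : wd A x y = n := by
  have := geodesic_wd h (Nat.zero_le n) (le_refl n) (Nat.zero_le n)
  rw [h.1, h.2.1] at this
  omega

lemma geodesic_reverse {n : ℕ} {γ : ℕ → H} {x y : H}
    (h : IsDiscreteGeodesic A n γ x y) :
    IsDiscreteGeodesic A n (fun i => γ (n - i)) y x := by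
  refine ⟨by simpa using h.2.1, by simpa using h.1, ?_⟩
  intro i hi j hj
  have hh := h.2.2 (n - i) (by omega) (n - j) (by omega)
  rw [hh]
  rcases abs_cases (((n-i:ℕ):ℤ) - ((n-j:ℕ):ℤ)) with ⟨he, h0⟩ | ⟨he, h0⟩ <;> rw [he] <;>
    rcases abs_cases ((i:ℤ) - (j:ℤ)) with ⟨he2, h02⟩ | ⟨he2, h02⟩ <;> rw [he2] <;> omega

lemma geodesic_shift {n : ℕ} {γ : ℕ → H} {x y : H}
    (h : IsDiscreteGeodesic A n γ x y) {a b : ℕ} (hab : a ≤ b) (hbn : b ≤ n) :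
    IsDiscreteGeodesic A (b - a) (fun i => γ (a + i)) (γ a) (γ b) := by
  refine ⟨by simp, by simp [show a + (b - a) = b by omega], ?_⟩
  intro i hi j hj
  have hh := h.2.2 (a + i) (by omega) (a + j) (by omega)
  rw [hh]
  rcases abs_cases (((a+i:ℕ):ℤ) - ((a+j:ℕ):ℤ)) with ⟨he, h0⟩ | ⟨he, h0⟩ <;> rw [he] <;>
    rcases abs_cases ((i:ℤ) - (j:ℤ)) with ⟨he2, h02⟩ | ⟨he2, h02⟩ <;> rw [he2] <;> omega

lemma gp_le_geodesic (hgen : Subgroup.closure A = ⊤) {n : ℕ} {γ : ℕ → H} {x y : H}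
    (h : IsDiscreteGeodesic A n γ x y) {i : ℕ} (hi : i ≤ n) :
    gp A 1 x y ≤ (wd A 1 (γ i) : ℝ) := by
  have h1 : wd A 1 x ≤ wd A 1 (γ i) + i := by
    have := wd_triangle hgen 1 (γ i) x
    have hw : wd A (γ i) x = i := by
      rw [wd_comm hgen, ← h.1]
      simpa using geodesic_wd h (Nat.zero_le n) hi (Nat.zero_le i)
    omega
  have h2 : wd A 1 y ≤ wd A 1 (γ i) + (n - i) := by
    have := wd_triangle hgen 1 (γ i) y
    have hw : wd A (γ i) y = n - i := by
      rw [← h.2.1]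
      exact geodesic_wd h hi (le_refl n) hi
    omega
  have h3 : wd A x y = n := geodesic_len h
  rw [gp]
  have c1 : (wd A 1 x : ℝ) ≤ (wd A 1 (γ i) : ℝ) + i := by exact_mod_cast h1
  have c2 : (wd A 1 y : ℝ) ≤ (wd A 1 (γ i) : ℝ) + (n - i : ℕ) := by exact_mod_cast h2
  have c3 : (wd A x y : ℝ) = n := by exact_mod_cast h3
  have : ((n - i : ℕ) : ℝ) = (n : ℝ) - i := by
    have : (i : ℝ) ≤ n := by exact_mod_cast hi
    push_cast [Nat.cast_sub hi]
    ring
  rw [this] at c2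
  linarith

lemma exp_beats_linear (a b : ℝ) (ha : 0 ≤ a) (hb : 0 ≤ b) :
    ∃ M : ℕ, ∀ K : ℕ, M ≤ K → a * K + b < (2:ℝ) ^ (K - 1) := by
  set a' : ℝ := a + b + 1 with ha'
  have ha'1 : 1 ≤ a' := by simp [ha']; linarith
  set r : ℕ := ⌈a'⌉₊ with hr
  have har : a' ≤ (2:ℝ) ^ r := by
    calc a' ≤ (r : ℝ) := Nat.le_ceil a'
    _ ≤ (2:ℝ) ^ r := by
        exact_mod_cast le_of_lt (by exact_mod_cast (Nat.lt_two_pow_self (n := r)) : (r:ℝ) < (2:ℝ)^r)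
  refine ⟨2 * r + 4, ?_⟩
  intro K hK
  obtain ⟨K', hK'⟩ : ∃ K', K = K' + r + 2 := ⟨K - r - 2, by omega⟩
  have hK'big : r + 2 ≤ K' := by omega
  have hexp : (2:ℝ) ^ (K - 1) = 2 ^ (r + 1) * 2 ^ K' := by
    rw [← pow_add]
    congr 1
    omega
  have h2K' : (K' : ℝ) + 1 ≤ (2:ℝ) ^ K' := by
    exact_mod_cast (Nat.lt_two_pow_self (n := K'))
  have hKr : (K : ℝ) = K' + r + 2 := by exact_mod_cast congrArg (Nat.cast : ℕ → ℝ) hK'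
  rw [hexp]
  have h1 : (2:ℝ) ^ (r+1) * 2 ^ K' ≥ (2 * a') * ((K':ℝ) + 1) := by
    have hp : (0:ℝ) < 2 ^ K' := by positivity
    have : (2:ℝ) ^ (r+1) = 2 * 2 ^ r := by ring
    rw [this]
    have h2 : (2:ℝ) * a' ≤ 2 * 2 ^ r := by linarith
    nlinarith [h2K']
  have hrK : (r : ℝ) + 2 ≤ K' := by exact_mod_cast hK'big
  nlinarith [h1, hrK, hKr]

lemma bound_from_clog (δ σ a b : ℝ) (hδ : 0 ≤ δ) (hσ : 0 ≤ σ) (ha : 0 ≤ a) (hb : 0 ≤ b) :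
    ∃ D₀ : ℕ, ∀ D L : ℕ, (D:ℝ) ≤ δ * (Nat.clog 2 L) + σ → (L:ℝ) ≤ a * D + b → D ≤ D₀ := by
  obtain ⟨M, hM⟩ := exp_beats_linear (a * δ) (a * σ + b) (by positivity) (by positivity)
  set K₁ : ℕ := max M 1 with hK₁
  refine ⟨⌈δ * K₁ + σ⌉₊, ?_⟩
  intro D L hD hL
  set K : ℕ := Nat.clog 2 L with hK
  have hKle : K ≤ K₁ := by
    by_contra hgt
    push_neg at hgt
    have hK1 : 1 ≤ K := le_trans (le_max_right M 1) (le_of_lt hgt)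
    have hMK : M ≤ K := le_trans (le_max_left M 1) (le_of_lt hgt)
    have hLgt : ¬ (L ≤ 2 ^ (K - 1)) := by
      intro hle
      have := (Nat.clog_le_iff_le_pow (by norm_num : 1 < 2)).2 hle
      omega
    push_neg at hLgt
    have hreal : ((2:ℕ) ^ (K-1) : ℝ) < (L : ℝ) := by exact_mod_cast hLgt
    have hcomb : (L : ℝ) ≤ (a * δ) * K + (a * σ + b) := by
      calc (L:ℝ) ≤ a * D + b := hL
      _ ≤ a * (δ * K + σ) + b := by nlinarith
      _ = (a * δ) * K + (a * σ + b) := by ring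
    have := hM K hMK
    have hcast : ((2:ℕ) ^ (K-1) : ℝ) = (2:ℝ) ^ (K-1) := by push_cast; ring
    linarith [hcast ▸ hreal]
  have : (D : ℝ) ≤ δ * K₁ + σ := by
    have : (K : ℝ) ≤ K₁ := by exact_mod_cast hKle
    nlinarith
  calc D ≤ ⌈(D:ℝ)⌉₊ := by simp
  _ ≤ ⌈δ * K₁ + σ⌉₊ := Nat.ceil_le_ceil this


lemma wd_triangle_real (hgen : Subgroup.closure A = ⊤) (x y z : H) :
    (wd A x z : ℝ) ≤ (wd A x y : ℝ) + (wd A y z : ℝ) := by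
  exact_mod_cast wd_triangle hgen x y z

/-- A `σ`-chain of length `L`. -/
def ChainStep (A : Set H) (σ : ℝ) (L : ℕ) (c : ℕ → H) : Prop :=
  ∀ i, i < L → (wd A (c i) (c (i+1)) : ℝ) ≤ σ

lemma chainStep_mono {σ : ℝ} {L L' : ℕ} {c : ℕ → H} (h : ChainStep A σ L c)
    (hL : L' ≤ L) : ChainStep A σ L' c :=
  fun i hi => h i (lt_of_lt_of_le hi hL)

lemma geodesic_chainStep {σ : ℝ} (hσ : 1 ≤ σ) {n : ℕ} {γ : ℕ → H} {x y : H}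
    (h : IsDiscreteGeodesic A n γ x y) : ChainStep A σ n γ := by
  intro i hi
  have h1 : wd A (γ i) (γ (i+1)) = (i+1) - i :=
    geodesic_wd h (le_of_lt hi) hi (Nat.le_succ i)
  have h2 : wd A (γ i) (γ (i+1)) = 1 := by omega
  rw [h2]
  simpa using hσ

/-- The key divergence lemma: any point of a geodesic joining the endpoints of a
`σ`-chain of length `L` is within `δ * log₂ L + σ` of the chain. -/
lemma divergence (hgen : Subgroup.closure A = ⊤) {δ σ : ℝ} (hδ : 0 ≤ δ) (hσ : 0 ≤ σ)
    (hrips : ∀ x y z : H, ∀ n₁ n₂ n₃ : ℕ, ∀ α β γ : ℕ → H,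
      IsDiscreteGeodesic A n₁ α x y → IsDiscreteGeodesic A n₂ β y z →
      IsDiscreteGeodesic A n₃ γ z x → ∀ i, i ≤ n₁ →
        ∃ j, (j ≤ n₂ ∧ (wd A (α i) (β j) : ℝ) ≤ δ) ∨
             (j ≤ n₃ ∧ (wd A (α i) (γ j) : ℝ) ≤ δ)) :
    ∀ L : ℕ, ∀ c : ℕ → H, ChainStep A σ L c → ∀ N : ℕ, ∀ g : ℕ → H,
      IsDiscreteGeodesic A N g (c 0) (c L) → ∀ i, i ≤ N →
      ∃ j ≤ L, (wd A (g i) (c j) : ℝ) ≤ δ * (Nat.clog 2 L : ℝ) + σ := by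
  intro L
  induction L using Nat.strong_induction_on with
  | _ L IH =>
  intro c hc N g hg i hi
  rcases Nat.lt_or_ge L 2 with hL | hL
  · -- L = 0 or 1
    refine ⟨0, Nat.zero_le _, ?_⟩
    have hN : (N : ℝ) ≤ σ := by
      interval_cases L
      · have : wd A (c 0) (c 0) = N := geodesic_len hg
        rw [wd_self] at this
        rw [← this]
        simpa using hσ
      · have : wd A (c 0) (c 1) = N := geodesic_len hg
        rw [← this]
        exact hc 0 (by norm_num)
    have hwi : wd A (g i) (c 0) = i := by
      rw [wd_comm hgen, ← hg.1]
      simpa using geodesic_wd hg (Nat.zero_le N) hi (Nat.zero_le i)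
    have : (wd A (g i) (c 0) : ℝ) ≤ σ := by
      rw [hwi]
      calc (i:ℝ) ≤ N := by exact_mod_cast hi
      _ ≤ σ := hN
    calc (wd A (g i) (c 0) : ℝ) ≤ σ := this
    _ ≤ δ * (Nat.clog 2 L : ℝ) + σ := by
        have : (0:ℝ) ≤ δ * (Nat.clog 2 L : ℝ) := by positivity
        linarith
  · -- L ≥ 2
    set h : ℕ := (L + 1) / 2 with hh
    have hh1 : 1 ≤ h := by omega
    have hhL : h < L := by omega
    have hLh : L - h ≤ h := by omega
    have hclog : Nat.clog 2 L = Nat.clog 2 h + 1 := by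
      rw [Nat.clog_of_two_le (by norm_num) hL]
      have : (L + 2 - 1) / 2 = h := by omega
      rw [this]
    obtain ⟨βr, hβ⟩ := exists_geodesic hgen (c L) (c h)
    obtain ⟨γr, hγ⟩ := exists_geodesic hgen (c h) (c 0)
    set nβ := wd A (c L) (c h) with hnβ
    set nγ := wd A (c h) (c 0) with hnγ
    obtain ⟨j, hcase⟩ := hrips (c 0) (c L) (c h) N nβ nγ g βr γr hg hβ hγ i hi
    have hclog_bound : ∀ m : ℕ, m ≤ h → δ * (Nat.clog 2 m : ℝ) + σ + δ ≤
        δ * (Nat.clog 2 L : ℝ) + σ := by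
      intro m hm
      have : (Nat.clog 2 m : ℝ) ≤ (Nat.clog 2 h : ℝ) := by
        exact_mod_cast Nat.clog_mono_right 2 hm
      rw [hclog]
      push_cast
      nlinarith
    rcases hcase with ⟨hjβ, hdβ⟩ | ⟨hjγ, hdγ⟩
    · -- close to the side from c L to c h; use the sub-chain on [h, L]
      set cβ : ℕ → H := fun t => c (h + t) with hcβ
      have hcβstep : ChainStep A σ (L - h) cβ := by
        intro t ht
        have := hc (h + t) (by omega)
        simpa [hcβ, Nat.add_assoc] using this
      have hβrr : IsDiscreteGeodesic A nβ (fun t => βr (nβ - t)) (c h) (c L) :=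
        geodesic_reverse hβ
      have hends : IsDiscreteGeodesic A nβ (fun t => βr (nβ - t)) (cβ 0) (cβ (L - h)) := by
        have e0 : cβ 0 = c h := by simp [hcβ]
        have e1 : cβ (L - h) = c L := by
          simp only [hcβ]
          congr 1
          omega
        rw [e0, e1]
        exact hβrr
      obtain ⟨j₂, hj₂, hd₂⟩ := IH (L - h) (by omega) cβ hcβstep nβ _ hends (nβ - j) (by omega)
      have hpt : βr (nβ - (nβ - j)) = βr j := by
        congr 1
        omega
      refine ⟨h + j₂, by omega, ?_⟩
      have htri := wd_triangle_real hgen (g i) (βr j) (c (h + j₂))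
      have hd₂' : (wd A (βr j) (c (h + j₂)) : ℝ) ≤ δ * (Nat.clog 2 (L - h) : ℝ) + σ := by
        rw [← hpt]
        exact hd₂
      have := hclog_bound (L - h) hLh
      linarith
    · -- close to the side from c h to c 0; use the sub-chain on [0, h]
      have hcstep : ChainStep A σ h c := chainStep_mono hc (le_of_lt hhL)
      have hγrr : IsDiscreteGeodesic A nγ (fun t => γr (nγ - t)) (c 0) (c h) :=
        geodesic_reverse hγ
      obtain ⟨j₂, hj₂, hd₂⟩ := IH h hhL c hcstep nγ _ hγrr (nγ - j) (by omega)
      have hpt : γr (nγ - (nγ - j)) = γr j := by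
        congr 1
        omega
      refine ⟨j₂, by omega, ?_⟩
      have htri := wd_triangle_real hgen (g i) (γr j) (c j₂)
      have hd₂' : (wd A (γr j) (c j₂) : ℝ) ≤ δ * (Nat.clog 2 h : ℝ) + σ := by
        rw [← hpt]
        exact hd₂
      have := hclog_bound h (le_refl h)
      linarith

/-- Concatenation of two chains. -/
def chainConcat (c₁ : ℕ → H) (L₁ : ℕ) (c₂ : ℕ → H) : ℕ → H :=
  fun j => if j ≤ L₁ then c₁ j else c₂ (j - L₁)

lemma chainConcat_zero (c₁ : ℕ → H) (L₁ : ℕ) (c₂ : ℕ → H) :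
    chainConcat c₁ L₁ c₂ 0 = c₁ 0 := by simp [chainConcat]

lemma chainConcat_last {c₁ : ℕ → H} {L₁ : ℕ} {c₂ : ℕ → H} (hend : c₁ L₁ = c₂ 0)
    (L₂ : ℕ) : chainConcat c₁ L₁ c₂ (L₁ + L₂) = c₂ L₂ := by
  unfold chainConcat
  by_cases h : L₂ = 0
  · subst h
    rw [if_pos (by omega)]
    simpa using hend
  · rw [if_neg (by omega)]
    congr 1
    omega

lemma chainConcat_step {σ : ℝ} {c₁ : ℕ → H} {L₁ : ℕ} {c₂ : ℕ → H} {L₂ : ℕ}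
    (h₁ : ChainStep A σ L₁ c₁) (h₂ : ChainStep A σ L₂ c₂) (hend : c₁ L₁ = c₂ 0) :
    ChainStep A σ (L₁ + L₂) (chainConcat c₁ L₁ c₂) := by
  intro i hi
  unfold chainConcat
  rcases lt_trichotomy i L₁ with h | h | h
  · rw [if_pos (by omega), if_pos (by omega)]
    exact h₁ i h
  · subst h
    rw [if_pos le_rfl, if_neg (by omega), hend]
    have he : i + 1 - i = 1 := by omega
    rw [he]
    exact h₂ 0 (by omega)
  · rw [if_neg (by omega), if_neg (by omega)]
    have he : i + 1 - L₁ = (i - L₁) + 1 := by omega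
    rw [he]
    exact h₂ (i - L₁) (by omega)

lemma chainConcat_mem (c₁ : ℕ → H) (L₁ : ℕ) (c₂ : ℕ → H) {L₂ j : ℕ} (hj : j ≤ L₁ + L₂) :
    (∃ j₁ ≤ L₁, chainConcat c₁ L₁ c₂ j = c₁ j₁) ∨
    (∃ j₂ ≤ L₂, chainConcat c₁ L₁ c₂ j = c₂ j₂) := by
  unfold chainConcat
  by_cases h : j ≤ L₁
  · exact Or.inl ⟨j, h, by rw [if_pos h]⟩
  · exact Or.inr ⟨j - L₁, by omega, by rw [if_neg h]⟩


/-- A monotone reparametrisation of a sub-chain between two indices. -/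
lemma midchain (hgen : Subgroup.closure A = ⊤) {σ : ℝ} {n : ℕ} {c : ℕ → H}
    (hc : ChainStep A σ n c) {s t : ℕ} (hs : s ≤ n) (ht : t ≤ n) :
    ∃ (mc : ℕ → H) (Mid : ℕ), (Mid : ℤ) = |(s:ℤ) - (t:ℤ)| ∧ ChainStep A σ Mid mc ∧
      mc 0 = c s ∧ mc Mid = c t ∧ ∀ j, ∃ s', s' ≤ n ∧ mc j = c s' := by
  rcases le_total s t with h | h
  · refine ⟨fun j => c (s + min j (t - s)), t - s, ?_, ?_, by simp, ?_, ?_⟩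
    · rcases abs_cases ((s:ℤ) - (t:ℤ)) with ⟨he, h0⟩ | ⟨he, h0⟩ <;> omega
    · intro j hj
      show (wd A (c (s + min j (t - s))) (c (s + min (j+1) (t - s))) : ℝ) ≤ σ
      have h0 := hc (s + j) (by omega)
      have e1 : s + min j (t - s) = s + j := by omega
      have e2 : s + min (j+1) (t - s) = (s + j) + 1 := by omega
      rw [e1, e2]
      exact h0
    · show c (s + min (t - s) (t - s)) = c t
      congr 1
      omega
    · intro j
      exact ⟨s + min j (t - s), by omega, rfl⟩
  · refine ⟨fun j => c (s - min j (s - t)), s - t, ?_, ?_, by simp, ?_, ?_⟩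
    · rcases abs_cases ((s:ℤ) - (t:ℤ)) with ⟨he, h0⟩ | ⟨he, h0⟩ <;> omega
    · intro j hj
      show (wd A (c (s - min j (s - t))) (c (s - min (j+1) (s - t))) : ℝ) ≤ σ
      have h0 := hc (s - j - 1) (by omega)
      have e0 : (s - j - 1) + 1 = s - j := by omega
      rw [e0] at h0
      have e1 : s - min j (s - t) = s - j := by omega
      have e2 : s - min (j+1) (s - t) = s - j - 1 := by omega
      rw [e1, e2, wd_comm hgen]
      exact h0
    · show c (s - min (s - t) (s - t)) = c t
      congr 1
      omega
    · intro j
      exact ⟨s - min j (s - t), by omega, rfl⟩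

set_option maxHeartbeats 1000000 in
/-- Uniform bound: every point of a geodesic joining the endpoints of a discrete
quasi-geodesic chain is uniformly close to the chain. -/
lemma chain_near_geodesic (hgen : Subgroup.closure A = ⊤) {δ σ lam k : ℝ}
    (hδ : 0 ≤ δ) (hσ : 1 ≤ σ) (hlam : 1 ≤ lam) (hk : 0 ≤ k)
    (hrips : ∀ x y z : H, ∀ n₁ n₂ n₃ : ℕ, ∀ α β γ : ℕ → H,
      IsDiscreteGeodesic A n₁ α x y → IsDiscreteGeodesic A n₂ β y z →
      IsDiscreteGeodesic A n₃ γ z x → ∀ i, i ≤ n₁ →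
        ∃ j, (j ≤ n₂ ∧ (wd A (α i) (β j) : ℝ) ≤ δ) ∨
             (j ≤ n₃ ∧ (wd A (α i) (γ j) : ℝ) ≤ δ)) :
    ∃ D₀ : ℕ, ∀ n : ℕ, ∀ c : ℕ → H, ChainStep A σ n c →
      (∀ s s' : ℕ, s ≤ s' → s' ≤ n →
        ((s' - s : ℕ) : ℝ) ≤ lam * ((wd A (c s) (c s') : ℝ) + k)) →
      ∀ N : ℕ, ∀ g : ℕ → H, IsDiscreteGeodesic A N g (c 0) (c n) →
      ∀ i, i ≤ N → ∃ s ≤ n, (wd A (g i) (c s) : ℝ) ≤ (D₀ : ℝ) := by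
  have hσ0 : (0:ℝ) ≤ σ := le_trans zero_le_one hσ
  obtain ⟨D₀, hD₀⟩ := bound_from_clog δ σ (2 + 6*lam) (lam * k) hδ hσ0
    (by nlinarith) (by nlinarith)
  refine ⟨D₀, ?_⟩
  intro n c hc hlow N g hg
  set dmin : ℕ → ℕ := fun i => sInf {d | ∃ s, s ≤ n ∧ wd A (g i) (c s) = d} with hdmin
  have dmin_le : ∀ i, ∀ s, s ≤ n → dmin i ≤ wd A (g i) (c s) :=
    fun i s hs => Nat.sInf_le ⟨s, hs, rfl⟩
  have dmin_spec : ∀ i, ∃ s, s ≤ n ∧ wd A (g i) (c s) = dmin i := by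
    intro i
    have hne : {d | ∃ s, s ≤ n ∧ wd A (g i) (c s) = d}.Nonempty :=
      ⟨wd A (g i) (c 0), 0, Nat.zero_le _, rfl⟩
    exact Nat.sInf_mem hne
  set D : ℕ := (Finset.range (N+1)).sup dmin with hD
  have hD_le : ∀ i, i ≤ N → dmin i ≤ D :=
    fun i hi => Finset.le_sup (Finset.mem_range.2 (by omega))
  suffices hkey : D ≤ D₀ by
    intro i hi
    obtain ⟨s, hs, hws⟩ := dmin_spec i
    refine ⟨s, hs, ?_⟩
    rw [hws]
    exact_mod_cast le_trans (hD_le i hi) hkey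
  obtain ⟨i₀, hi₀mem, hi₀⟩ := Finset.exists_mem_eq_sup (Finset.range (N+1))
    ⟨0, Finset.mem_range.2 (by omega)⟩ dmin
  have hi₀N : i₀ ≤ N := by
    have := Finset.mem_range.1 hi₀mem
    omega
  have hDlow : ∀ s, s ≤ n → D ≤ wd A (g i₀) (c s) := by
    intro s hs
    rw [hD, hi₀]
    exact dmin_le i₀ s hs
  set ia : ℕ := i₀ - 2*D with hia
  set ib : ℕ := min N (i₀ + 2*D) with hib
  have hia0 : ia ≤ i₀ := by omega
  have hi0b : i₀ ≤ ib := by omega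
  have hibN : ib ≤ N := by omega
  have hspan : ib - ia ≤ 4*D := by omega
  obtain ⟨sa, hsan, hsa⟩ := dmin_spec ia
  obtain ⟨sb, hsbn, hsb⟩ := dmin_spec ib
  have hEaD : wd A (g ia) (c sa) ≤ D := by rw [hsa]; exact hD_le ia (by omega)
  have hEbD : wd A (g ib) (c sb) ≤ D := by rw [hsb]; exact hD_le ib hibN
  obtain ⟨conA, hconA⟩ := exists_geodesic hgen (g ia) (c sa)
  obtain ⟨conB, hconB⟩ := exists_geodesic hgen (c sb) (g ib)
  set Ea : ℕ := wd A (g ia) (c sa) with hEa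
  set Eb : ℕ := wd A (c sb) (g ib) with hEb
  have hEb' : Eb = wd A (g ib) (c sb) := wd_comm hgen _ _
  have hEbD' : Eb ≤ D := by rw [hEb']; exact hEbD
  obtain ⟨mc, Mid, hMid, hmcstep, hmc0, hmcend, hmcpts⟩ := midchain hgen hc hsan hsbn
  set C₁ : ℕ → H := chainConcat conA Ea mc with hC₁
  set C : ℕ → H := chainConcat C₁ (Ea + Mid) conB with hC
  set Ltot : ℕ := Ea + Mid + Eb with hLtot
  have hend1 : conA Ea = mc 0 := by rw [hmc0]; exact hconA.2.1
  have hend2 : C₁ (Ea + Mid) = conB 0 := by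
    rw [hC₁, chainConcat_last hend1, hmcend, hconB.1]
  have hC₁step : ChainStep A σ (Ea + Mid) C₁ :=
    chainConcat_step (geodesic_chainStep hσ hconA) hmcstep hend1
  have hCstep : ChainStep A σ Ltot C := by
    rw [hC, hLtot]
    exact chainConcat_step hC₁step (geodesic_chainStep hσ hconB) hend2
  have hC0 : C 0 = g ia := by
    rw [hC, chainConcat_zero, hC₁, chainConcat_zero, hconA.1]
  have hCL : C Ltot = g ib := by
    rw [hC, hLtot, chainConcat_last hend2, hconB.2.1]
  have hg' : IsDiscreteGeodesic A (ib - ia) (fun j => g (ia + j)) (C 0) (C Ltot) := by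
    rw [hC0, hCL]
    exact geodesic_shift hg (by omega) hibN
  obtain ⟨j, hj, hjd⟩ := divergence hgen hδ hσ0 hrips Ltot C hCstep (ib - ia) _ hg'
    (i₀ - ia) (by omega)
  have hpt : g (ia + (i₀ - ia)) = g i₀ := by congr 1; omega
  rw [hpt] at hjd
  clear_value Ltot C C₁ Eb Ea ib ia D dmin
  have hfar : (D : ℝ) ≤ wd A (g i₀) (C j) := by
    have hmid_far : ∀ j', (D:ℝ) ≤ wd A (g i₀) (mc j') := by
      intro j'
      obtain ⟨s', hs'n, hs'⟩ := hmcpts j'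
      rw [hs']
      exact_mod_cast hDlow s' hs'n
    rw [hLtot] at hj
    rcases chainConcat_mem C₁ (Ea + Mid) conB hj with ⟨j₁, hj₁, hCj⟩ | ⟨j₂, hj₂le, hCj⟩
    · rw [hC, hCj]
      rcases chainConcat_mem conA Ea mc (L₂ := Mid) hj₁ with ⟨j₁', hj₁', hC₁j⟩ | ⟨j₂', _, hC₁j⟩
      · rw [hC₁, hC₁j]
        by_cases hcase : 2*D ≤ i₀
        · have h1 : wd A (g i₀) (g ia) = i₀ - ia := by
            rw [wd_comm hgen]
            exact geodesic_wd hg (by omega) hi₀N hia0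
          have h2 : wd A (g ia) (conA j₁') = j₁' := by
            have := geodesic_wd hconA (Nat.zero_le Ea) hj₁' (Nat.zero_le j₁')
            rw [hconA.1] at this
            omega
          have h3 : wd A (conA j₁') (g ia) = j₁' := by rw [wd_comm hgen]; exact h2
          have htri := wd_triangle hgen (g i₀) (conA j₁') (g ia)
          have hEaD' : Ea ≤ D := hEaD
          have : D ≤ wd A (g i₀) (conA j₁') := by omega
          exact_mod_cast this
        · have hia00 : ia = 0 := by omega
          have hEa0 : Ea = 0 := by
            have h1 : dmin 0 ≤ wd A (g 0) (c 0) := dmin_le 0 0 (Nat.zero_le n)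
            have h2 : g 0 = c 0 := hg.1
            rw [h2, wd_self] at h1
            have h3 : Ea = dmin ia := hsa
            rw [hia00] at h3
            omega
          have hj₁'0 : j₁' = 0 := by omega
          have heq : conA j₁' = c sa := by
            rw [hj₁'0, hconA.1]
            refine eq_of_wd_eq_zero hgen ?_
            rw [← hEa]
            exact hEa0
          rw [heq]
          exact_mod_cast hDlow sa hsan
      · rw [hC₁, hC₁j]
        exact hmid_far j₂'
    · rw [hC, hCj]
      by_cases hcase : i₀ + 2*D ≤ N
      · have h1 : wd A (g i₀) (g ib) = ib - i₀ := geodesic_wd hg hi₀N hibN hi0b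
        have h2 : wd A (conB j₂) (g ib) = Eb - j₂ := by
          have := geodesic_wd hconB hj₂le (le_refl Eb) hj₂le
          rw [hconB.2.1] at this
          exact this
        have htri := wd_triangle hgen (g i₀) (conB j₂) (g ib)
        have : D ≤ wd A (g i₀) (conB j₂) := by omega
        exact_mod_cast this
      · have hibN' : ib = N := by omega
        have hEb0 : Eb = 0 := by
          have h1 : dmin N ≤ wd A (g N) (c n) := dmin_le N n (le_refl n)
          have h2 : g N = c n := hg.2.1
          rw [h2, wd_self] at h1
          have h3 : wd A (g ib) (c sb) = dmin ib := hsb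
          rw [hibN'] at h3
          rw [hEb', hibN']
          omega
        have hj₂0 : j₂ = 0 := by omega
        have heq : conB j₂ = c sb := by rw [hj₂0, hconB.1]
        rw [heq]
        exact_mod_cast hDlow sb hsbn
  have hMidR : (Mid : ℝ) ≤ lam * (6 * D + k) := by
    have hwds : wd A (c sa) (c sb) ≤ 6 * D := by
      have tA := wd_triangle hgen (c sa) (g ib) (c sb)
      have tB := wd_triangle hgen (c sa) (g ia) (g ib)
      have h1 : wd A (c sa) (g ia) = Ea := by rw [hEa]; exact wd_comm hgen _ _
      have h2 : wd A (g ia) (g ib) = ib - ia := geodesic_wd hg (by omega) hibN (by omega)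
      have h3 : wd A (g ib) (c sb) ≤ D := hEbD
      have hEaD' : Ea ≤ D := hEaD
      omega
    rcases le_total sa sb with hst | hst
    · have hMidval : Mid = sb - sa := by
        rcases abs_cases ((sa:ℤ) - (sb:ℤ)) with ⟨he, h0⟩ | ⟨he, h0⟩ <;> omega
      have hl := hlow sa sb hst hsbn
      rw [← hMidval] at hl
      have hcast : (wd A (c sa) (c sb) : ℝ) ≤ 6 * D := by exact_mod_cast hwds
      nlinarith
    · have hMidval : Mid = sa - sb := by
        rcases abs_cases ((sa:ℤ) - (sb:ℤ)) with ⟨he, h0⟩ | ⟨he, h0⟩ <;> omega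
      have hl := hlow sb sa hst hsan
      rw [← hMidval] at hl
      have hcast : (wd A (c sb) (c sa) : ℝ) ≤ 6 * D := by
        rw [wd_comm hgen]
        exact_mod_cast hwds
      nlinarith
  have hLtotR : (Ltot : ℝ) ≤ (2 + 6*lam) * D + lam * k := by
    have h1 : (Ea : ℝ) ≤ D := by exact_mod_cast hEaD
    have h2 : (Eb : ℝ) ≤ D := by exact_mod_cast hEbD'
    have h3 : (Ltot : ℝ) = (Ea : ℝ) + Mid + Eb := by rw [hLtot]; push_cast; ring
    rw [h3]
    nlinarith
  exact hD₀ D Ltot (le_trans hfar hjd) hLtotR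

/-- Thin triangles: on any geodesic from `u` to `v` there is a point whose distance
to the identity is at most `(u|v) + 2δ + 1`. -/
lemma special_point (hgen : Subgroup.closure A = ⊤) {δ : ℝ} (hδ : 0 ≤ δ)
    (hrips : ∀ x y z : H, ∀ n₁ n₂ n₃ : ℕ, ∀ α β γ : ℕ → H,
      IsDiscreteGeodesic A n₁ α x y → IsDiscreteGeodesic A n₂ β y z →
      IsDiscreteGeodesic A n₃ γ z x → ∀ i, i ≤ n₁ →
        ∃ j, (j ≤ n₂ ∧ (wd A (α i) (β j) : ℝ) ≤ δ) ∨
             (j ≤ n₃ ∧ (wd A (α i) (γ j) : ℝ) ≤ δ)) (u v : H) :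
    ∃ (n : ℕ) (α : ℕ → H) (t : ℕ), IsDiscreteGeodesic A n α u v ∧ t ≤ n ∧
      (wd A 1 (α t) : ℝ) ≤ gp A 1 u v + 2*δ + 1 := by
  obtain ⟨α, hα⟩ := exists_geodesic hgen u v
  obtain ⟨β, hβ⟩ := exists_geodesic hgen v 1
  obtain ⟨γg, hγ⟩ := exists_geodesic hgen (1:H) u
  set n : ℕ := wd A u v with hn
  set a : ℕ := wd A 1 u with ha
  set b : ℕ := wd A 1 v with hb
  have hnb : wd A v 1 = b := wd_comm hgen v 1
  have hna : wd A 1 u = a := rfl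
  have htri1 : b ≤ a + n := by
    have := wd_triangle hgen 1 u v
    omega
  have htri2 : a ≤ b + n := by
    have h1 := wd_triangle hgen 1 v u
    have h2 : wd A v u = n := by rw [wd_comm hgen]
    omega
  set t : ℕ := (n + a - b + 1) / 2 with ht
  have htn : t ≤ n := by omega
  have hgp : gp A 1 u v = ((a:ℝ) + b - n) / 2 := rfl
  refine ⟨n, α, t, hα, htn, ?_⟩
  obtain ⟨j, hcase⟩ := hrips u v 1 n (wd A v 1) (wd A 1 u) α β γg hα hβ hγ t htn
  -- distances along α
  have huαt : wd A u (α t) = t := by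
    rw [← hα.1]
    have := geodesic_wd hα (Nat.zero_le n) htn (Nat.zero_le t)
    omega
  have hαtv : wd A (α t) v = n - t := by
    rw [← hα.2.1]
    exact geodesic_wd hα htn (le_refl n) htn
  rcases hcase with ⟨hj, hd⟩ | ⟨hj, hd⟩
  · -- close to the side from v to 1
    rw [hnb] at hj
    have h1 : wd A 1 (β j) = b - j := by
      rw [wd_comm hgen, ← hβ.2.1]
      have := geodesic_wd hβ (show j ≤ wd A v 1 by omega) (le_refl _) (show j ≤ wd A v 1 by omega)
      omega
    have h2 : wd A v (β j) = j := by
      rw [← hβ.1]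
      have := geodesic_wd hβ (Nat.zero_le _) (show j ≤ wd A v 1 by omega) (Nat.zero_le j)
      omega
    -- n - t ≤ j + δ
    have h3 : (wd A v (α t) : ℝ) ≤ (wd A v (β j) : ℝ) + (wd A (β j) (α t) : ℝ) :=
      wd_triangle_real hgen v (β j) (α t)
    have h4 : (wd A (β j) (α t) : ℝ) ≤ δ := by
      rw [wd_comm hgen]
      exact hd
    have h5 : wd A v (α t) = n - t := by rw [wd_comm hgen]; exact hαtv
    have h6 : (wd A 1 (α t) : ℝ) ≤ (wd A 1 (β j) : ℝ) + δ := by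
      have := wd_triangle_real hgen 1 (β j) (α t)
      linarith
    rw [h1] at h6
    rw [h2, h5] at h3
    have e1 : ((b - j : ℕ) : ℝ) = (b:ℝ) - j := by
      rw [Nat.cast_sub hj]
    have e2 : ((n - t : ℕ) : ℝ) = (n:ℝ) - t := by
      rw [Nat.cast_sub htn]
    rw [e1] at h6
    rw [e2] at h3
    have e3 : (2 * t : ℝ) ≤ (n:ℝ) + a - b + 1 := by
      have hnat : 2 * t ≤ n + a - b + 1 := by omega
      have hcast : ((2 * t : ℕ):ℝ) ≤ ((n + a - b + 1 : ℕ):ℝ) := by exact_mod_cast hnat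
      push_cast at hcast
      have : ((n + a - b : ℕ):ℝ) = (n:ℝ) + a - b := by
        have : b ≤ n + a := by omega
        push_cast [Nat.cast_sub this]
        ring
      rw [ht]
      calc (2 * ((n + a - b + 1) / 2 : ℕ) : ℝ) = ((2 * ((n + a - b + 1) / 2) : ℕ) : ℝ) := by
            push_cast; ring
      _ ≤ ((n + a - b + 1 : ℕ) : ℝ) := by exact_mod_cast hnat
      _ = (n:ℝ) + a - b + 1 := by push_cast [Nat.cast_sub (show b ≤ n + a by omega)]; ring
    rw [hgp]
    linarith
  · -- close to the side from 1 to u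
    rw [hna] at hj
    have h1 : wd A 1 (γg j) = j := by
      rw [← hγ.1]
      have := geodesic_wd hγ (Nat.zero_le _) (show j ≤ a by omega) (Nat.zero_le j)
      omega
    have h2 : wd A (γg j) u = a - j := by
      rw [← hγ.2.1]
      have := geodesic_wd hγ (show j ≤ a by omega) (le_refl a) (show j ≤ a by omega)
      omega
    have h3 : (wd A u (α t) : ℝ) ≤ (wd A u (γg j) : ℝ) + (wd A (γg j) (α t) : ℝ) :=
      wd_triangle_real hgen u (γg j) (α t)
    have h4 : (wd A (γg j) (α t) : ℝ) ≤ δ := by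
      rw [wd_comm hgen]
      exact hd
    have h5 : wd A u (γg j) = a - j := by rw [wd_comm hgen]; exact h2
    have h6 : (wd A 1 (α t) : ℝ) ≤ (j:ℝ) + δ := by
      have := wd_triangle_real hgen 1 (γg j) (α t)
      rw [h1] at this
      linarith
    rw [huαt, h5] at h3
    have e1 : ((a - j : ℕ) : ℝ) = (a:ℝ) - j := by rw [Nat.cast_sub hj]
    rw [e1] at h3
    have e3 : (n:ℝ) + a - b ≤ 2 * t := by
      have hnat : n + a - b ≤ 2 * t := by omega
      have hba : b ≤ n + a := by omega
      have hcast : ((n + a - b : ℕ):ℝ) ≤ ((2 * t : ℕ):ℝ) := by exact_mod_cast hnat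
      push_cast [Nat.cast_sub hba] at hcast
      linarith
    rw [hgp]
    linarith


end Aux

set_option maxHeartbeats 2000000 in
/-- A quasi-isometric embedding endomorphism of a hyperbolic group satisfies the BRP. -/
theorem brp_of_quasiIsometricEmbedding
    (A : Set H) (hA : A.Finite) (hgen : Subgroup.closure A = ⊤)
    (hhyp : IsHyperbolic A) (φ : H →* H)
    (lam k : ℝ) (hlam : 1 ≤ lam) (hk : 0 ≤ k)
    (hqie : ∀ x y : H,
      lam⁻¹ * (wd A x y : ℝ) - k ≤ (wd A (φ x) (φ y) : ℝ) ∧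
      (wd A (φ x) (φ y) : ℝ) ≤ lam * (wd A x y : ℝ) + k) :
    BRP A φ := by
  intro p hp
  obtain ⟨δ, hδ, hrips⟩ := hhyp
  have hσ : (1:ℝ) ≤ lam + k := by linarith
  obtain ⟨D₀, hD₀⟩ := chain_near_geodesic hgen hδ hσ hlam hk hrips
  set J : ℝ := lam * (2*(D₀:ℝ) + 1 + k) with hJ
  have hD₀0 : (0:ℝ) ≤ (D₀:ℝ) := Nat.cast_nonneg _
  have hJ0 : 0 ≤ J := by
    rw [hJ]
    have h1 : (0:ℝ) ≤ 2*(D₀:ℝ) + 1 + k := by linarith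
    nlinarith
  set q : ℝ := lam * (p + 2*δ + 1 + J) + k + (D₀:ℝ) with hq
  have hq0 : 0 ≤ q := by
    rw [hq]
    have h1 : (0:ℝ) ≤ p + 2*δ + 1 + J := by linarith
    nlinarith
  refine ⟨q, hq0, ?_⟩
  intro u v huv
  obtain ⟨n, α, t, hα, htn, hαt⟩ := special_point hgen hδ hrips u v
  have hαtp : (wd A 1 (α t):ℝ) ≤ p + 2*δ + 1 := by linarith
  set c : ℕ → H := fun s => φ (α s) with hc
  have hlam0 : (0:ℝ) < lam := by linarith
  have hstep : ChainStep A (lam + k) n c := by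
    intro i hi
    have h1 := (hqie (α i) (α (i+1))).2
    have h2 : wd A (α i) (α (i+1)) = 1 :=
      geodesic_wd hα (le_of_lt hi) hi (Nat.le_succ i) |>.trans (by omega)
    rw [h2] at h1
    push_cast at h1
    rw [hc]
    linarith
  have hlowc : ∀ s s' : ℕ, s ≤ s' → s' ≤ n →
      ((s' - s : ℕ) : ℝ) ≤ lam * ((wd A (c s) (c s') : ℝ) + k) := by
    intro s s' hss hs'n
    have h1 := (hqie (α s) (α s')).1
    have h2 : wd A (α s) (α s') = s' - s := geodesic_wd hα (le_trans hss hs'n) hs'n hss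
    rw [h2] at h1
    have hinv : lam * lam⁻¹ = 1 := mul_inv_cancel₀ (ne_of_gt hlam0)
    rw [hc]
    nlinarith [h1]
  have hc0 : c 0 = φ u := congrArg φ hα.1
  have hcn : c n = φ v := congrArg φ hα.2.1
  obtain ⟨g, hgG⟩ := exists_geodesic hgen (φ u) (φ v)
  set N : ℕ := wd A (φ u) (φ v) with hN
  have hgG' : IsDiscreteGeodesic A N g (c 0) (c n) := by rw [hc0, hcn]; exact hgG
  have hclose := hD₀ n c hstep hlowc N g hgG'
  have hclose' : ∀ i, ∃ s, s ≤ n ∧ (i ≤ N → (wd A (g i) (c s) : ℝ) ≤ (D₀:ℝ)) := by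
    intro i
    by_cases hi : i ≤ N
    · obtain ⟨s, hs, hd⟩ := hclose i hi
      exact ⟨s, hs, fun _ => hd⟩
    · exact ⟨0, Nat.zero_le _, fun h => absurd h hi⟩
  choose s0 hs0n hs0d using hclose'
  set sfn : ℕ → ℕ := fun i => if i = 0 then 0 else if i = N then n else s0 i with hsfn
  have hsfn_n : ∀ i, sfn i ≤ n := by
    intro i
    rw [hsfn]
    dsimp only
    split
    · exact Nat.zero_le n
    · split
      · exact le_refl n
      · exact hs0n i
  have hsfd : ∀ i, i ≤ N → (wd A (g i) (c (sfn i)) : ℝ) ≤ (D₀:ℝ) := by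
    intro i hi
    rw [hsfn]
    dsimp only
    split
    · rename_i h0
      subst h0
      have : wd A (g 0) (c 0) = 0 := by rw [hgG'.1, wd_self]
      rw [this]
      simpa using hD₀0
    · split
      · rename_i h0 hN'
        subst hN'
        have : wd A (g N) (c n) = 0 := by rw [hgG'.2.1, wd_self]
        rw [this]
        simpa using hD₀0
      · exact hs0d i hi
  -- find the index whose chain-parameter is close to t
  have hsfn0 : sfn 0 ≤ t := by
    rw [hsfn]
    simp
  set istar : ℕ := Nat.findGreatest (fun i => sfn i ≤ t) N with histar
  have histarN : istar ≤ N := Nat.findGreatest_le N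
  have histar_le : sfn istar ≤ t :=
    Nat.findGreatest_spec (P := fun i => sfn i ≤ t) (Nat.zero_le N) hsfn0
  clear_value istar
  have hclose_t : ((t - sfn istar : ℕ) : ℝ) ≤ J := by
    by_cases h0 : N = 0
    · -- degenerate case: φ u = φ v, so n is small
      have hwd0 : wd A (c 0) (c n) = 0 := by
        rw [hc0, hcn]
        omega
      have hsmall := hlowc 0 n (Nat.zero_le n) (le_refl n)
      rw [hwd0] at hsmall
      have hn_small : ((n : ℕ) : ℝ) ≤ lam * k := by
        have e : ((n - 0 : ℕ) : ℝ) = (n:ℝ) := by norm_num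
        rw [e] at hsmall
        simpa using hsmall
      have h1 : ((t - sfn istar : ℕ) : ℝ) ≤ (n : ℝ) := by
        have : t - sfn istar ≤ n := by omega
        exact_mod_cast this
      have h2 : lam * k ≤ J := by
        rw [hJ]
        nlinarith
      linarith
    by_cases hcase : istar = N
    · have hsN : sfn N = n := by
        rw [hsfn]
        simp [h0]
      have heqn : sfn istar = n := by rw [hcase, hsN]
      have ht' : t = n := by omega
      have hz : t - sfn istar = 0 := by omega
      rw [hz]
      simpa using hJ0
    · have hlt : istar < N := lt_of_le_of_ne histarN hcase
      have hnext : ¬ sfn (istar + 1) ≤ t := by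
        refine Nat.findGreatest_is_greatest (P := fun i => sfn i ≤ t) (n := N) ?_ (by omega)
        rw [← histar]
        omega
      push_neg at hnext
      -- jump bound between sfn istar and sfn (istar+1)
      have hwd_pair : (wd A (c (sfn istar)) (c (sfn (istar+1))) : ℝ) ≤ 2*(D₀:ℝ) + 1 := by
        have t1 := wd_triangle_real hgen (c (sfn istar)) (g istar) (c (sfn (istar+1)))
        have t2 := wd_triangle_real hgen (g istar) (g (istar+1)) (c (sfn (istar+1)))
        have d1 : (wd A (c (sfn istar)) (g istar) : ℝ) ≤ (D₀:ℝ) := by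
          rw [wd_comm hgen]
          exact hsfd istar histarN
        have d2 : (wd A (g (istar+1)) (c (sfn (istar+1))) : ℝ) ≤ (D₀:ℝ) := hsfd (istar+1) hlt
        have d3 : wd A (g istar) (g (istar+1)) = 1 := by
          have h := hgG'.2.2 istar (le_of_lt hlt) (istar+1) hlt
          rcases abs_cases ((istar:ℤ) - ((istar+1 : ℕ):ℤ)) with ⟨he, h0⟩ | ⟨he, h0⟩ <;>
            rw [he] at h <;> omega
        have d3' : (wd A (g istar) (g (istar+1)) : ℝ) = 1 := by rw [d3]; norm_num
        linarith
      have hordered : sfn istar ≤ sfn (istar + 1) := by omega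
      have hjmp := hlowc (sfn istar) (sfn (istar+1)) hordered (hsfn_n (istar+1))
      have hJle : ((sfn (istar+1) - sfn istar : ℕ) : ℝ) ≤ J := by
        rw [hJ]
        nlinarith
      have hmono : t - sfn istar ≤ sfn (istar+1) - sfn istar := by omega
      calc ((t - sfn istar : ℕ) : ℝ) ≤ ((sfn (istar+1) - sfn istar : ℕ) : ℝ) := by
            exact_mod_cast hmono
      _ ≤ J := hJle
  -- final assembly
  have hfinal : gp A 1 (φ u) (φ v) ≤ (wd A 1 (g istar) : ℝ) := gp_le_geodesic hgen hgG histarN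
  have hb1 : (wd A 1 (g istar) : ℝ) ≤ (wd A 1 (c (sfn istar)) : ℝ) + (D₀:ℝ) := by
    have := wd_triangle_real hgen 1 (c (sfn istar)) (g istar)
    have h2 : (wd A (c (sfn istar)) (g istar) : ℝ) ≤ (D₀:ℝ) := by
      rw [wd_comm hgen]
      exact hsfd istar histarN
    linarith
  have hb2 : (wd A 1 (c (sfn istar)) : ℝ) ≤ lam * (wd A 1 (α (sfn istar)) : ℝ) + k := by
    have h1 := (hqie 1 (α (sfn istar))).2
    have h2 : φ (1:H) = 1 := map_one φ
    rw [h2] at h1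
    rw [hc]
    exact h1
  have hb3 : (wd A 1 (α (sfn istar)) : ℝ) ≤ (wd A 1 (α t) : ℝ) + J := by
    have htr := wd_triangle_real hgen 1 (α t) (α (sfn istar))
    have h2 : wd A (α t) (α (sfn istar)) = t - sfn istar := by
      rw [wd_comm hgen]
      exact geodesic_wd hα (le_trans histar_le htn) htn histar_le
    rw [h2] at htr
    linarith [hclose_t]
  rw [hq]
  have hmul : lam * (wd A 1 (α (sfn istar)) : ℝ) ≤ lam * (p + 2*δ + 1 + J) := by
    have : (wd A 1 (α (sfn istar)) : ℝ) ≤ p + 2*δ + 1 + J := by linarith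
    nlinarith
  linarith

end Paper
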